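/- For the Finsler function F = e^{−2x1}(y2³ + e^{−x1 x3} y3 y1²)^{2/3} on U = {(x,y) ∈ ℝ³×ℝ³ : y1 ≠ 0}, the Barthel connection coefficients are N^1_1 = −½(3 + x3)y1, N^2_1 = −(3/4)y2, N^2_2 = −(3/4)y1, N^3_1 = −(3/4)y2³/(y1² e^{−x1 x3}), N^3_2 = (9/4)y2²/(y1 e^{−x1 x3}), N^3_3 = −y3 x1, and all other coefficients vanish. -/

import Mathlib

open scoped BigOperators

/-- Partial derivative of `f` with respect to the `j`-th coordinate at `v`. -/
noncomputable def pd {n : ℕ} (f : (Fin n → ℝ) → ℝ) (j : Fin n) (v : Fin n → ℝ) : ℝ :=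
  deriv (fun t => f (Function.update v j t)) (v j)

/-- The square of the Finsler function: `F² = e^{−2x1}(y2³ + e^{−x1x3} y3 y1²)^{2/3}`. -/
noncomputable def F2 (x y : Fin 3 → ℝ) : ℝ :=
  Real.exp (-2 * x 0) * ((y 1) ^ 3 + Real.exp (-(x 0) * (x 2)) * (y 2) * (y 0) ^ 2) ^ ((2 : ℝ) / 3)

/-- The open set `U`: `y1 ≠ 0` (and the quantity under the cube root positive). -/
def U (x y : Fin 3 → ℝ) : Prop :=
  y 0 ≠ 0 ∧ 0 < (y 1) ^ 3 + Real.exp (-(x 0) * (x 2)) * (y 2) * (y 0) ^ 2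

noncomputable def Bx (x : Fin 3 → ℝ) : ℝ := Real.exp (-(x 0) * (x 2))
noncomputable def Cx (x : Fin 3 → ℝ) : ℝ := Real.exp (-2 * x 0)
noncomputable def Af (x y : Fin 3 → ℝ) : ℝ := y 1 ^ 3 + Bx x * y 2 * y 0 ^ 2
noncomputable def Pw (x y : Fin 3 → ℝ) : ℝ := Af x y ^ ((2:ℝ)/3 - 1)
noncomputable def Pw2 (x y : Fin 3 → ℝ) : ℝ := Af x y ^ ((2:ℝ)/3 - 1 - 1)
noncomputable def Av (x y : Fin 3 → ℝ) : Fin 3 → ℝ :=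
  ![2 * Bx x * y 2 * y 0, 3 * y 1 ^ 2, Bx x * y 0 ^ 2]
noncomputable def FD (x y : Fin 3 → ℝ) (k : Fin 3) : ℝ :=
  Cx x * ((2:ℝ)/3) * Pw x y * Av x y k

lemma cont_update {n : ℕ} (y : Fin n → ℝ) (i m : Fin n) :
    Continuous (fun t : ℝ => Function.update y i t m) := by
  rcases eq_or_ne m i with h | h
  · subst h; simpa [Function.update_self] using continuous_id'
  · simpa [Function.update_of_ne h] using continuous_const

lemma deriv_helper {q r : ℝ → ℝ} {q' r' a e : ℝ} (c : ℝ)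
    (hq : HasDerivAt q q' a) (hr : HasDerivAt r r' a) (h0 : q a ≠ 0) :
    HasDerivAt (fun t => c * q t ^ e * r t)
      (c * (q' * e * q a ^ (e - 1)) * r a + c * q a ^ e * r') a := by
  have h1 := ((hq.rpow_const (p := e) (Or.inl h0)).const_mul c).mul hr
  exact h1

lemma deriv_helper2 {u q r : ℝ → ℝ} {u' q' r' a e : ℝ} (c : ℝ)
    (hu : HasDerivAt u u' a) (hq : HasDerivAt q q' a) (hr : HasDerivAt r r' a)
    (h0 : q a ≠ 0) :
    HasDerivAt (fun t => u t * c * q t ^ e * r t)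
      (u' * c * q a ^ e * r a + u a * c * (q' * e * q a ^ (e - 1)) * r a
        + u a * c * q a ^ e * r') a := by
  have h1 : HasDerivAt (fun t => u t * c * q t ^ e * r t)
      ((u' * c * q a ^ e + u a * c * (q' * e * q a ^ (e - 1))) * r a + (u a * c * q a ^ e) * r') a :=
    ((hu.mul_const c).mul (hq.rpow_const (p := e) (Or.inl h0))).mul hr
  convert h1 using 1
  all_goals ring

lemma pdF2y (x y : Fin 3 → ℝ) (hA : 0 < Af x y) (k : Fin 3) :
    pd (fun y' => F2 x y') k y = FD x y k := by
  have hne : y 1 ^ 3 + Bx x * y 2 * y 0 ^ 2 ≠ 0 := ne_of_gt hA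
  fin_cases k
  · have hfun : (fun t => F2 x (Function.update y 0 t))
        = fun t => Cx x * (y 1 ^ 3 + Bx x * y 2 * t ^ 2) ^ ((2:ℝ)/3) := by
      funext t; simp [F2, Cx, Bx, Function.update_apply]
    have hq : HasDerivAt (fun t : ℝ => y 1 ^ 3 + Bx x * y 2 * t ^ 2)
        (Bx x * y 2 * (2 * y 0)) (y 0) := by
      simpa using ((hasDerivAt_pow 2 (y 0)).const_mul (Bx x * y 2)).const_add (y 1 ^ 3)
    have H := (hq.rpow_const (p := (2:ℝ)/3) (Or.inl hne)).const_mul (Cx x)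
    show deriv (fun t => F2 x (Function.update y 0 t)) (y 0) = _
    rw [hfun, H.deriv]
    simp [FD, Av, Pw, Af]
    ring
  · have hfun : (fun t => F2 x (Function.update y 1 t))
        = fun t => Cx x * (t ^ 3 + Bx x * y 2 * y 0 ^ 2) ^ ((2:ℝ)/3) := by
      funext t; simp [F2, Cx, Bx, Function.update_apply]
    have hq : HasDerivAt (fun t : ℝ => t ^ 3 + Bx x * y 2 * y 0 ^ 2)
        (3 * y 1 ^ 2) (y 1) := by
      simpa using (hasDerivAt_pow 3 (y 1)).add_const (Bx x * y 2 * y 0 ^ 2)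
    have H := (hq.rpow_const (p := (2:ℝ)/3) (Or.inl hne)).const_mul (Cx x)
    show deriv (fun t => F2 x (Function.update y 1 t)) (y 1) = _
    rw [hfun, H.deriv]
    simp [FD, Av, Pw, Af]
    ring
  · have hfun : (fun t => F2 x (Function.update y 2 t))
        = fun t => Cx x * (y 1 ^ 3 + Bx x * t * y 0 ^ 2) ^ ((2:ℝ)/3) := by
      funext t; simp [F2, Cx, Bx, Function.update_apply]
    have hq : HasDerivAt (fun t : ℝ => y 1 ^ 3 + Bx x * t * y 0 ^ 2)
        (Bx x * y 0 ^ 2) (y 2) := by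
      simpa using (((hasDerivAt_id (y 2)).const_mul (Bx x)).mul_const (y 0 ^ 2)).const_add (y 1 ^ 3)
    have H := (hq.rpow_const (p := (2:ℝ)/3) (Or.inl hne)).const_mul (Cx x)
    show deriv (fun t => F2 x (Function.update y 2 t)) (y 2) = _
    rw [hfun, H.deriv]
    simp [FD, Av, Pw, Af]
    ring

noncomputable def Hm (x y : Fin 3 → ℝ) : Fin 3 → Fin 3 → ℝ := fun i k =>
  (!![2 * Bx x * y 2, 0, 2 * Bx x * y 0;
      0, 6 * y 1, 0;
      2 * Bx x * y 0, 0, 0] : Matrix (Fin 3) (Fin 3) ℝ) i k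

noncomputable def DD (x y : Fin 3 → ℝ) (i k : Fin 3) : ℝ :=
  Cx x * ((2:ℝ)/3) * (Pw x y * Hm x y i k
    + ((2:ℝ)/3 - 1) * Pw2 x y * Av x y i * Av x y k)

lemma pdFDy (x y : Fin 3 → ℝ) (hA : 0 < Af x y) (i k : Fin 3) :
    pd (fun y' => FD x y' k) i y = DD x y i k := by
  have hne : y 1 ^ 3 + Bx x * y 2 * y 0 ^ 2 ≠ 0 := ne_of_gt hA
  fin_cases i <;> fin_cases k
  · -- i=0, k=0
    have hfun : (fun t => FD x (Function.update y 0 t) 0)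
        = fun t => Cx x * ((2:ℝ)/3) * (y 1 ^ 3 + Bx x * y 2 * t ^ 2) ^ ((2:ℝ)/3 - 1) * (2 * Bx x * y 2 * t) := by
      funext t
      simp [FD, Av, Pw, Af, Function.update_apply]
    have hq : HasDerivAt (fun t : ℝ => y 1 ^ 3 + Bx x * y 2 * t ^ 2) (Bx x * y 2 * (2 * y 0)) (y 0) := by
      simpa using ((hasDerivAt_pow 2 (y 0)).const_mul (Bx x * y 2)).const_add (y 1 ^ 3)
    have hr : HasDerivAt (fun t : ℝ => 2 * Bx x * y 2 * t) (2 * Bx x * y 2) (y 0) := by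
      simpa using (hasDerivAt_id (y 0)).const_mul (2 * Bx x * y 2)
    have H := deriv_helper (e := (2:ℝ)/3 - 1) (Cx x * ((2:ℝ)/3)) hq hr hne
    show deriv (fun t => FD x (Function.update y 0 t) 0) (y 0) = _
    rw [hfun, H.deriv]
    simp [DD, Hm, Av, Pw, Pw2, Af, Matrix.vecHead, Matrix.vecTail]
    ring
  · -- i=0, k=1
    have hfun : (fun t => FD x (Function.update y 0 t) 1)
        = fun t => Cx x * ((2:ℝ)/3) * (y 1 ^ 3 + Bx x * y 2 * t ^ 2) ^ ((2:ℝ)/3 - 1) * (3 * y 1 ^ 2) := by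
      funext t
      simp [FD, Av, Pw, Af, Function.update_apply]
    have hq : HasDerivAt (fun t : ℝ => y 1 ^ 3 + Bx x * y 2 * t ^ 2) (Bx x * y 2 * (2 * y 0)) (y 0) := by
      simpa using ((hasDerivAt_pow 2 (y 0)).const_mul (Bx x * y 2)).const_add (y 1 ^ 3)
    have hr : HasDerivAt (fun t : ℝ => 3 * y 1 ^ 2) (0) (y 0) := by
      exact hasDerivAt_const (y 0) _
    have H := deriv_helper (e := (2:ℝ)/3 - 1) (Cx x * ((2:ℝ)/3)) hq hr hne
    show deriv (fun t => FD x (Function.update y 0 t) 1) (y 0) = _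
    rw [hfun, H.deriv]
    simp [DD, Hm, Av, Pw, Pw2, Af, Matrix.vecHead, Matrix.vecTail]
    ring
  · -- i=0, k=2
    have hfun : (fun t => FD x (Function.update y 0 t) 2)
        = fun t => Cx x * ((2:ℝ)/3) * (y 1 ^ 3 + Bx x * y 2 * t ^ 2) ^ ((2:ℝ)/3 - 1) * (Bx x * t ^ 2) := by
      funext t
      simp [FD, Av, Pw, Af, Function.update_apply]
    have hq : HasDerivAt (fun t : ℝ => y 1 ^ 3 + Bx x * y 2 * t ^ 2) (Bx x * y 2 * (2 * y 0)) (y 0) := by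
      simpa using ((hasDerivAt_pow 2 (y 0)).const_mul (Bx x * y 2)).const_add (y 1 ^ 3)
    have hr : HasDerivAt (fun t : ℝ => Bx x * t ^ 2) (Bx x * (2 * y 0)) (y 0) := by
      simpa using (hasDerivAt_pow 2 (y 0)).const_mul (Bx x)
    have H := deriv_helper (e := (2:ℝ)/3 - 1) (Cx x * ((2:ℝ)/3)) hq hr hne
    show deriv (fun t => FD x (Function.update y 0 t) 2) (y 0) = _
    rw [hfun, H.deriv]
    simp [DD, Hm, Av, Pw, Pw2, Af, Matrix.vecHead, Matrix.vecTail]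
    ring
  · -- i=1, k=0
    have hfun : (fun t => FD x (Function.update y 1 t) 0)
        = fun t => Cx x * ((2:ℝ)/3) * (t ^ 3 + Bx x * y 2 * y 0 ^ 2) ^ ((2:ℝ)/3 - 1) * (2 * Bx x * y 2 * y 0) := by
      funext t
      simp [FD, Av, Pw, Af, Function.update_apply]
    have hq : HasDerivAt (fun t : ℝ => t ^ 3 + Bx x * y 2 * y 0 ^ 2) (3 * y 1 ^ 2) (y 1) := by
      simpa using (hasDerivAt_pow 3 (y 1)).add_const (Bx x * y 2 * y 0 ^ 2)
    have hr : HasDerivAt (fun t : ℝ => 2 * Bx x * y 2 * y 0) (0) (y 1) := by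
      exact hasDerivAt_const (y 1) _
    have H := deriv_helper (e := (2:ℝ)/3 - 1) (Cx x * ((2:ℝ)/3)) hq hr hne
    show deriv (fun t => FD x (Function.update y 1 t) 0) (y 1) = _
    rw [hfun, H.deriv]
    simp [DD, Hm, Av, Pw, Pw2, Af, Matrix.vecHead, Matrix.vecTail]
    ring
  · -- i=1, k=1
    have hfun : (fun t => FD x (Function.update y 1 t) 1)
        = fun t => Cx x * ((2:ℝ)/3) * (t ^ 3 + Bx x * y 2 * y 0 ^ 2) ^ ((2:ℝ)/3 - 1) * (3 * t ^ 2) := by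
      funext t
      simp [FD, Av, Pw, Af, Function.update_apply]
    have hq : HasDerivAt (fun t : ℝ => t ^ 3 + Bx x * y 2 * y 0 ^ 2) (3 * y 1 ^ 2) (y 1) := by
      simpa using (hasDerivAt_pow 3 (y 1)).add_const (Bx x * y 2 * y 0 ^ 2)
    have hr : HasDerivAt (fun t : ℝ => 3 * t ^ 2) (3 * (2 * y 1)) (y 1) := by
      simpa using (hasDerivAt_pow 2 (y 1)).const_mul (3:ℝ)
    have H := deriv_helper (e := (2:ℝ)/3 - 1) (Cx x * ((2:ℝ)/3)) hq hr hne
    show deriv (fun t => FD x (Function.update y 1 t) 1) (y 1) = _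
    rw [hfun, H.deriv]
    simp [DD, Hm, Av, Pw, Pw2, Af, Matrix.vecHead, Matrix.vecTail]
    ring
  · -- i=1, k=2
    have hfun : (fun t => FD x (Function.update y 1 t) 2)
        = fun t => Cx x * ((2:ℝ)/3) * (t ^ 3 + Bx x * y 2 * y 0 ^ 2) ^ ((2:ℝ)/3 - 1) * (Bx x * y 0 ^ 2) := by
      funext t
      simp [FD, Av, Pw, Af, Function.update_apply]
    have hq : HasDerivAt (fun t : ℝ => t ^ 3 + Bx x * y 2 * y 0 ^ 2) (3 * y 1 ^ 2) (y 1) := by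
      simpa using (hasDerivAt_pow 3 (y 1)).add_const (Bx x * y 2 * y 0 ^ 2)
    have hr : HasDerivAt (fun t : ℝ => Bx x * y 0 ^ 2) (0) (y 1) := by
      exact hasDerivAt_const (y 1) _
    have H := deriv_helper (e := (2:ℝ)/3 - 1) (Cx x * ((2:ℝ)/3)) hq hr hne
    show deriv (fun t => FD x (Function.update y 1 t) 2) (y 1) = _
    rw [hfun, H.deriv]
    simp [DD, Hm, Av, Pw, Pw2, Af, Matrix.vecHead, Matrix.vecTail]
    ring
  · -- i=2, k=0
    have hfun : (fun t => FD x (Function.update y 2 t) 0)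
        = fun t => Cx x * ((2:ℝ)/3) * (y 1 ^ 3 + Bx x * t * y 0 ^ 2) ^ ((2:ℝ)/3 - 1) * (2 * Bx x * t * y 0) := by
      funext t
      simp [FD, Av, Pw, Af, Function.update_apply]
    have hq : HasDerivAt (fun t : ℝ => y 1 ^ 3 + Bx x * t * y 0 ^ 2) (Bx x * y 0 ^ 2) (y 2) := by
      simpa using (((hasDerivAt_id (y 2)).const_mul (Bx x)).mul_const (y 0 ^ 2)).const_add (y 1 ^ 3)
    have hr : HasDerivAt (fun t : ℝ => 2 * Bx x * t * y 0) (2 * Bx x * y 0) (y 2) := by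
      simpa using ((hasDerivAt_id (y 2)).const_mul (2 * Bx x)).mul_const (y 0)
    have H := deriv_helper (e := (2:ℝ)/3 - 1) (Cx x * ((2:ℝ)/3)) hq hr hne
    show deriv (fun t => FD x (Function.update y 2 t) 0) (y 2) = _
    rw [hfun, H.deriv]
    simp [DD, Hm, Av, Pw, Pw2, Af, Matrix.vecHead, Matrix.vecTail]
    ring
  · -- i=2, k=1
    have hfun : (fun t => FD x (Function.update y 2 t) 1)
        = fun t => Cx x * ((2:ℝ)/3) * (y 1 ^ 3 + Bx x * t * y 0 ^ 2) ^ ((2:ℝ)/3 - 1) * (3 * y 1 ^ 2) := by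
      funext t
      simp [FD, Av, Pw, Af, Function.update_apply]
    have hq : HasDerivAt (fun t : ℝ => y 1 ^ 3 + Bx x * t * y 0 ^ 2) (Bx x * y 0 ^ 2) (y 2) := by
      simpa using (((hasDerivAt_id (y 2)).const_mul (Bx x)).mul_const (y 0 ^ 2)).const_add (y 1 ^ 3)
    have hr : HasDerivAt (fun t : ℝ => 3 * y 1 ^ 2) (0) (y 2) := by
      exact hasDerivAt_const (y 2) _
    have H := deriv_helper (e := (2:ℝ)/3 - 1) (Cx x * ((2:ℝ)/3)) hq hr hne
    show deriv (fun t => FD x (Function.update y 2 t) 1) (y 2) = _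
    rw [hfun, H.deriv]
    simp [DD, Hm, Av, Pw, Pw2, Af, Matrix.vecHead, Matrix.vecTail]
    ring
  · -- i=2, k=2
    have hfun : (fun t => FD x (Function.update y 2 t) 2)
        = fun t => Cx x * ((2:ℝ)/3) * (y 1 ^ 3 + Bx x * t * y 0 ^ 2) ^ ((2:ℝ)/3 - 1) * (Bx x * y 0 ^ 2) := by
      funext t
      simp [FD, Av, Pw, Af, Function.update_apply]
    have hq : HasDerivAt (fun t : ℝ => y 1 ^ 3 + Bx x * t * y 0 ^ 2) (Bx x * y 0 ^ 2) (y 2) := by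
      simpa using (((hasDerivAt_id (y 2)).const_mul (Bx x)).mul_const (y 0 ^ 2)).const_add (y 1 ^ 3)
    have hr : HasDerivAt (fun t : ℝ => Bx x * y 0 ^ 2) (0) (y 2) := by
      exact hasDerivAt_const (y 2) _
    have H := deriv_helper (e := (2:ℝ)/3 - 1) (Cx x * ((2:ℝ)/3)) hq hr hne
    show deriv (fun t => FD x (Function.update y 2 t) 2) (y 2) = _
    rw [hfun, H.deriv]
    simp [DD, Hm, Av, Pw, Pw2, Af, Matrix.vecHead, Matrix.vecTail]
    ring

lemma pd_pd_F2 (x y : Fin 3 → ℝ) (hA : 0 < Af x y) (i k : Fin 3) :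
    pd (fun y' => pd (fun y'' => F2 x y'') k y') i y = DD x y i k := by
  have hc : Continuous fun t : ℝ => Af x (Function.update y i t) := by
    have h : Continuous fun t : ℝ =>
        (Function.update y i t 1) ^ 3
          + Bx x * (Function.update y i t 2) * (Function.update y i t 0) ^ 2 :=
      ((cont_update y i 1).pow 3).add
        ((continuous_const.mul (cont_update y i 2)).mul ((cont_update y i 0).pow 2))
    exact h
  have ht : Filter.Tendsto (fun t => Af x (Function.update y i t)) (nhds (y i))
      (nhds (Af x y)) := by
    simpa [ContinuousAt, Function.update_eq_self] using hc.continuousAt (x := y i)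
  have hev : (fun t => pd (fun y'' => F2 x y'') k (Function.update y i t))
      =ᶠ[nhds (y i)] fun t => FD x (Function.update y i t) k := by
    filter_upwards [ht.eventually (eventually_gt_nhds hA)] with t htp
    exact pdF2y x _ htp k
  show deriv (fun t => pd (fun y'' => F2 x y'') k (Function.update y i t)) (y i) = _
  rw [hev.deriv_eq]
  exact pdFDy x y hA i k

noncomputable def XX (x y : Fin 3 → ℝ) : Fin 3 → ℝ :=
  ![ -2 * Cx x * (Af x y ^ ((2:ℝ)/3)) - (2:ℝ)/3 * x 2 * Cx x * Bx x * y 2 * y 0 ^ 2 * Pw x y,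
     0,
     -((2:ℝ)/3) * x 0 * Cx x * Bx x * y 2 * y 0 ^ 2 * Pw x y ]

lemma pdF2x (x y : Fin 3 → ℝ) (hA : 0 < Af x y) (k : Fin 3) :
    pd (fun x' => F2 x' y) k x = XX x y k := by
  have hne : y 1 ^ 3 + Bx x * y 2 * y 0 ^ 2 ≠ 0 := ne_of_gt hA
  fin_cases k
  · have hfun : (fun t => F2 (Function.update x 0 t) y)
        = fun t => Real.exp (-2 * t) * (y 1 ^ 3 + Real.exp (-t * x 2) * y 2 * y 0 ^ 2) ^ ((2:ℝ)/3) := by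
      funext t; simp [F2, Function.update_apply]
    have hu : HasDerivAt (fun t : ℝ => Real.exp (-2 * t)) (Real.exp (-2 * x 0) * (-2)) (x 0) := by
      simpa using ((hasDerivAt_id (x 0)).const_mul (-2 : ℝ)).exp
    have h1 : HasDerivAt (fun t : ℝ => -t * x 2) (-(x 2)) (x 0) := by
      simpa using (hasDerivAt_id (x 0)).neg.mul_const (x 2)
    have hq : HasDerivAt (fun t : ℝ => y 1 ^ 3 + Real.exp (-t * x 2) * y 2 * y 0 ^ 2)
        (Real.exp (-(x 0) * x 2) * -(x 2) * y 2 * y 0 ^ 2) (x 0) :=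
      ((h1.exp.mul_const (y 2)).mul_const (y 0 ^ 2)).const_add (y 1 ^ 3)
    have H : HasDerivAt (fun t => Real.exp (-2 * t) * (y 1 ^ 3 + Real.exp (-t * x 2) * y 2 * y 0 ^ 2) ^ ((2:ℝ)/3)) _ (x 0) :=
      hu.mul (hq.rpow_const (p := (2:ℝ)/3) (Or.inl hne))
    show deriv (fun t => F2 (Function.update x 0 t) y) (x 0) = _
    rw [hfun, H.deriv]
    simp [XX, Pw, Af, Cx, Bx]
    ring
  · have hfun : (fun t => F2 (Function.update x 1 t) y) = fun _ => F2 x y := by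
      funext t; simp [F2, Function.update_apply]
    show deriv (fun t => F2 (Function.update x 1 t) y) (x 1) = _
    rw [hfun, deriv_const]
    simp [XX]
  · have hfun : (fun t => F2 (Function.update x 2 t) y)
        = fun t => Real.exp (-2 * x 0) * (y 1 ^ 3 + Real.exp (-(x 0) * t) * y 2 * y 0 ^ 2) ^ ((2:ℝ)/3) := by
      funext t; simp [F2, Function.update_apply]
    have h1 : HasDerivAt (fun t : ℝ => -(x 0) * t) (-(x 0)) (x 2) := by
      simpa using (hasDerivAt_id (x 2)).const_mul (-(x 0))
    have hq : HasDerivAt (fun t : ℝ => y 1 ^ 3 + Real.exp (-(x 0) * t) * y 2 * y 0 ^ 2)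
        (Real.exp (-(x 0) * x 2) * -(x 0) * y 2 * y 0 ^ 2) (x 2) :=
      ((h1.exp.mul_const (y 2)).mul_const (y 0 ^ 2)).const_add (y 1 ^ 3)
    have H := (hq.rpow_const (p := (2:ℝ)/3) (Or.inl hne)).const_mul (Real.exp (-2 * x 0))
    show deriv (fun t => F2 (Function.update x 2 t) y) (x 2) = _
    rw [hfun, H.deriv]
    simp [XX, Pw, Af, Cx, Bx]
    ring

noncomputable def MM (x y : Fin 3 → ℝ) (j k : Fin 3) : ℝ :=
  (![-2 * Cx x, 0, 0] j) * ((2:ℝ)/3) * Pw x y * Av x y k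
  + Cx x * ((2:ℝ)/3) * (((2:ℝ)/3 - 1) * Pw2 x y
      * ((![-(x 2), 0, -(x 0)] j) * Bx x * y 2 * y 0 ^ 2) * Av x y k)
  + Cx x * ((2:ℝ)/3) * Pw x y
      * ((![-(x 2), 0, -(x 0)] j) * (![2 * Bx x * y 2 * y 0, 0, Bx x * y 0 ^ 2] k))

lemma pdFDx (x y : Fin 3 → ℝ) (hA : 0 < Af x y) (j k : Fin 3) :
    pd (fun x' => FD x' y k) j x = MM x y j k := by
  have hne : y 1 ^ 3 + Bx x * y 2 * y 0 ^ 2 ≠ 0 := ne_of_gt hA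
  fin_cases j <;> fin_cases k
  · -- j=0, k=0
    have hfun : (fun t => FD (Function.update x 0 t) y 0)
        = fun t => Real.exp (-2 * t) * ((2:ℝ)/3) * (y 1 ^ 3 + Real.exp (-t * x 2) * y 2 * y 0 ^ 2) ^ ((2:ℝ)/3 - 1) * (2 * Real.exp (-t * x 2) * y 2 * y 0) := by
      funext t; simp [FD, Av, Pw, Af, Cx, Bx, Function.update_apply]
    have hu : HasDerivAt (fun t : ℝ => Real.exp (-2 * t)) (Real.exp (-2 * x 0) * (-2)) (x 0) := by
      simpa using ((hasDerivAt_id (x 0)).const_mul (-2 : ℝ)).exp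
    have h1 : HasDerivAt (fun t : ℝ => -t * x 2) (-(x 2)) (x 0) := by
      simpa using (hasDerivAt_id (x 0)).neg.mul_const (x 2)
    have hq : HasDerivAt (fun t : ℝ => y 1 ^ 3 + Real.exp (-t * x 2) * y 2 * y 0 ^ 2)
        (Real.exp (-(x 0) * x 2) * -(x 2) * y 2 * y 0 ^ 2) (x 0) :=
      ((h1.exp.mul_const (y 2)).mul_const (y 0 ^ 2)).const_add (y 1 ^ 3)
    have hr : HasDerivAt (fun t : ℝ => 2 * Real.exp (-t * x 2) * y 2 * y 0) (2 * (Real.exp (-(x 0) * x 2) * -(x 2)) * y 2 * y 0) (x 0) := ((h1.exp.const_mul 2).mul_const (y 2)).mul_const (y 0)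
    have H := deriv_helper2 (e := (2:ℝ)/3 - 1) ((2:ℝ)/3) hu hq hr hne
    show deriv (fun t => FD (Function.update x 0 t) y 0) (x 0) = _
    rw [hfun, H.deriv]
    simp [MM, Av, Pw, Pw2, Af, Cx, Bx, Matrix.vecHead, Matrix.vecTail]
    ring
  · -- j=0, k=1
    have hfun : (fun t => FD (Function.update x 0 t) y 1)
        = fun t => Real.exp (-2 * t) * ((2:ℝ)/3) * (y 1 ^ 3 + Real.exp (-t * x 2) * y 2 * y 0 ^ 2) ^ ((2:ℝ)/3 - 1) * (3 * y 1 ^ 2) := by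
      funext t; simp [FD, Av, Pw, Af, Cx, Bx, Function.update_apply]
    have hu : HasDerivAt (fun t : ℝ => Real.exp (-2 * t)) (Real.exp (-2 * x 0) * (-2)) (x 0) := by
      simpa using ((hasDerivAt_id (x 0)).const_mul (-2 : ℝ)).exp
    have h1 : HasDerivAt (fun t : ℝ => -t * x 2) (-(x 2)) (x 0) := by
      simpa using (hasDerivAt_id (x 0)).neg.mul_const (x 2)
    have hq : HasDerivAt (fun t : ℝ => y 1 ^ 3 + Real.exp (-t * x 2) * y 2 * y 0 ^ 2)
        (Real.exp (-(x 0) * x 2) * -(x 2) * y 2 * y 0 ^ 2) (x 0) :=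
      ((h1.exp.mul_const (y 2)).mul_const (y 0 ^ 2)).const_add (y 1 ^ 3)
    have hr : HasDerivAt (fun t : ℝ => 3 * y 1 ^ 2) (0) (x 0) := hasDerivAt_const (x 0) _
    have H := deriv_helper2 (e := (2:ℝ)/3 - 1) ((2:ℝ)/3) hu hq hr hne
    show deriv (fun t => FD (Function.update x 0 t) y 1) (x 0) = _
    rw [hfun, H.deriv]
    simp [MM, Av, Pw, Pw2, Af, Cx, Bx, Matrix.vecHead, Matrix.vecTail]
    ring
  · -- j=0, k=2
    have hfun : (fun t => FD (Function.update x 0 t) y 2)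
        = fun t => Real.exp (-2 * t) * ((2:ℝ)/3) * (y 1 ^ 3 + Real.exp (-t * x 2) * y 2 * y 0 ^ 2) ^ ((2:ℝ)/3 - 1) * (Real.exp (-t * x 2) * y 0 ^ 2) := by
      funext t; simp [FD, Av, Pw, Af, Cx, Bx, Function.update_apply]
    have hu : HasDerivAt (fun t : ℝ => Real.exp (-2 * t)) (Real.exp (-2 * x 0) * (-2)) (x 0) := by
      simpa using ((hasDerivAt_id (x 0)).const_mul (-2 : ℝ)).exp
    have h1 : HasDerivAt (fun t : ℝ => -t * x 2) (-(x 2)) (x 0) := by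
      simpa using (hasDerivAt_id (x 0)).neg.mul_const (x 2)
    have hq : HasDerivAt (fun t : ℝ => y 1 ^ 3 + Real.exp (-t * x 2) * y 2 * y 0 ^ 2)
        (Real.exp (-(x 0) * x 2) * -(x 2) * y 2 * y 0 ^ 2) (x 0) :=
      ((h1.exp.mul_const (y 2)).mul_const (y 0 ^ 2)).const_add (y 1 ^ 3)
    have hr : HasDerivAt (fun t : ℝ => Real.exp (-t * x 2) * y 0 ^ 2) (Real.exp (-(x 0) * x 2) * -(x 2) * y 0 ^ 2) (x 0) := h1.exp.mul_const (y 0 ^ 2)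
    have H := deriv_helper2 (e := (2:ℝ)/3 - 1) ((2:ℝ)/3) hu hq hr hne
    show deriv (fun t => FD (Function.update x 0 t) y 2) (x 0) = _
    rw [hfun, H.deriv]
    simp [MM, Av, Pw, Pw2, Af, Cx, Bx, Matrix.vecHead, Matrix.vecTail]
    ring
  · -- j=1, k=0
    have hfun : (fun t => FD (Function.update x 1 t) y 0) = fun _ => FD x y 0 := by
      funext t; simp [FD, Av, Pw, Af, Cx, Bx, Function.update_apply]
    show deriv (fun t => FD (Function.update x 1 t) y 0) (x 1) = _
    rw [hfun, deriv_const]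
    simp [MM, Av, Matrix.vecHead, Matrix.vecTail]
  · -- j=1, k=1
    have hfun : (fun t => FD (Function.update x 1 t) y 1) = fun _ => FD x y 1 := by
      funext t; simp [FD, Av, Pw, Af, Cx, Bx, Function.update_apply]
    show deriv (fun t => FD (Function.update x 1 t) y 1) (x 1) = _
    rw [hfun, deriv_const]
    simp [MM, Av, Matrix.vecHead, Matrix.vecTail]
  · -- j=1, k=2
    have hfun : (fun t => FD (Function.update x 1 t) y 2) = fun _ => FD x y 2 := by
      funext t; simp [FD, Av, Pw, Af, Cx, Bx, Function.update_apply]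
    show deriv (fun t => FD (Function.update x 1 t) y 2) (x 1) = _
    rw [hfun, deriv_const]
    simp [MM, Av, Matrix.vecHead, Matrix.vecTail]
  · -- j=2, k=0
    have hfun : (fun t => FD (Function.update x 2 t) y 0)
        = fun t => Real.exp (-2 * x 0) * ((2:ℝ)/3) * (y 1 ^ 3 + Real.exp (-(x 0) * t) * y 2 * y 0 ^ 2) ^ ((2:ℝ)/3 - 1) * (2 * Real.exp (-(x 0) * t) * y 2 * y 0) := by
      funext t; simp [FD, Av, Pw, Af, Cx, Bx, Function.update_apply]
    have hu : HasDerivAt (fun _ : ℝ => Real.exp (-2 * x 0)) 0 (x 2) := hasDerivAt_const _ _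
    have h1 : HasDerivAt (fun t : ℝ => -(x 0) * t) (-(x 0)) (x 2) := by
      simpa using (hasDerivAt_id (x 2)).const_mul (-(x 0))
    have hq : HasDerivAt (fun t : ℝ => y 1 ^ 3 + Real.exp (-(x 0) * t) * y 2 * y 0 ^ 2)
        (Real.exp (-(x 0) * x 2) * -(x 0) * y 2 * y 0 ^ 2) (x 2) :=
      ((h1.exp.mul_const (y 2)).mul_const (y 0 ^ 2)).const_add (y 1 ^ 3)
    have hr : HasDerivAt (fun t : ℝ => 2 * Real.exp (-(x 0) * t) * y 2 * y 0) (2 * (Real.exp (-(x 0) * x 2) * -(x 0)) * y 2 * y 0) (x 2) := ((h1.exp.const_mul 2).mul_const (y 2)).mul_const (y 0)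
    have H := deriv_helper2 (e := (2:ℝ)/3 - 1) ((2:ℝ)/3) hu hq hr hne
    show deriv (fun t => FD (Function.update x 2 t) y 0) (x 2) = _
    rw [hfun, H.deriv]
    simp [MM, Av, Pw, Pw2, Af, Cx, Bx, Matrix.vecHead, Matrix.vecTail]
    ring
  · -- j=2, k=1
    have hfun : (fun t => FD (Function.update x 2 t) y 1)
        = fun t => Real.exp (-2 * x 0) * ((2:ℝ)/3) * (y 1 ^ 3 + Real.exp (-(x 0) * t) * y 2 * y 0 ^ 2) ^ ((2:ℝ)/3 - 1) * (3 * y 1 ^ 2) := by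
      funext t; simp [FD, Av, Pw, Af, Cx, Bx, Function.update_apply]
    have hu : HasDerivAt (fun _ : ℝ => Real.exp (-2 * x 0)) 0 (x 2) := hasDerivAt_const _ _
    have h1 : HasDerivAt (fun t : ℝ => -(x 0) * t) (-(x 0)) (x 2) := by
      simpa using (hasDerivAt_id (x 2)).const_mul (-(x 0))
    have hq : HasDerivAt (fun t : ℝ => y 1 ^ 3 + Real.exp (-(x 0) * t) * y 2 * y 0 ^ 2)
        (Real.exp (-(x 0) * x 2) * -(x 0) * y 2 * y 0 ^ 2) (x 2) :=
      ((h1.exp.mul_const (y 2)).mul_const (y 0 ^ 2)).const_add (y 1 ^ 3)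
    have hr : HasDerivAt (fun t : ℝ => 3 * y 1 ^ 2) (0) (x 2) := hasDerivAt_const (x 2) _
    have H := deriv_helper2 (e := (2:ℝ)/3 - 1) ((2:ℝ)/3) hu hq hr hne
    show deriv (fun t => FD (Function.update x 2 t) y 1) (x 2) = _
    rw [hfun, H.deriv]
    simp [MM, Av, Pw, Pw2, Af, Cx, Bx, Matrix.vecHead, Matrix.vecTail]
    ring
  · -- j=2, k=2
    have hfun : (fun t => FD (Function.update x 2 t) y 2)
        = fun t => Real.exp (-2 * x 0) * ((2:ℝ)/3) * (y 1 ^ 3 + Real.exp (-(x 0) * t) * y 2 * y 0 ^ 2) ^ ((2:ℝ)/3 - 1) * (Real.exp (-(x 0) * t) * y 0 ^ 2) := by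
      funext t; simp [FD, Av, Pw, Af, Cx, Bx, Function.update_apply]
    have hu : HasDerivAt (fun _ : ℝ => Real.exp (-2 * x 0)) 0 (x 2) := hasDerivAt_const _ _
    have h1 : HasDerivAt (fun t : ℝ => -(x 0) * t) (-(x 0)) (x 2) := by
      simpa using (hasDerivAt_id (x 2)).const_mul (-(x 0))
    have hq : HasDerivAt (fun t : ℝ => y 1 ^ 3 + Real.exp (-(x 0) * t) * y 2 * y 0 ^ 2)
        (Real.exp (-(x 0) * x 2) * -(x 0) * y 2 * y 0 ^ 2) (x 2) :=
      ((h1.exp.mul_const (y 2)).mul_const (y 0 ^ 2)).const_add (y 1 ^ 3)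
    have hr : HasDerivAt (fun t : ℝ => Real.exp (-(x 0) * t) * y 0 ^ 2) (Real.exp (-(x 0) * x 2) * -(x 0) * y 0 ^ 2) (x 2) := h1.exp.mul_const (y 0 ^ 2)
    have H := deriv_helper2 (e := (2:ℝ)/3 - 1) ((2:ℝ)/3) hu hq hr hne
    show deriv (fun t => FD (Function.update x 2 t) y 2) (x 2) = _
    rw [hfun, H.deriv]
    simp [MM, Av, Pw, Pw2, Af, Cx, Bx, Matrix.vecHead, Matrix.vecTail]
    ring

lemma pd_pdx_F2 (x y : Fin 3 → ℝ) (hA : 0 < Af x y) (j k : Fin 3) :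
    pd (fun x' => pd (fun y' => F2 x' y') k y) j x = MM x y j k := by
  have hc : Continuous fun t : ℝ => Af (Function.update x j t) y := by
    have h : Continuous fun t : ℝ =>
        y 1 ^ 3 + Real.exp (-(Function.update x j t 0) * (Function.update x j t 2)) * y 2 * y 0 ^ 2 :=
      continuous_const.add
        ((((((cont_update x j 0).neg).mul (cont_update x j 2)).rexp).mul continuous_const).mul
          continuous_const)
    exact h
  have ht : Filter.Tendsto (fun t => Af (Function.update x j t) y) (nhds (x j))
      (nhds (Af x y)) := by
    simpa [ContinuousAt, Function.update_eq_self] using hc.continuousAt (x := x j)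
  have hev : (fun t => pd (fun y' => F2 (Function.update x j t) y') k y)
      =ᶠ[nhds (x j)] fun t => FD (Function.update x j t) y k := by
    filter_upwards [ht.eventually (eventually_gt_nhds hA)] with t htp
    exact pdF2y _ y htp k
  show deriv (fun t => pd (fun y' => F2 (Function.update x j t) y') k y) (x j) = _
  rw [hev.deriv_eq]
  exact pdFDx x y hA j k


noncomputable def GE (x y : Fin 3 → ℝ) : Fin 3 → ℝ :=
  ![-(1/4) * (3 + x 2) * y 0 ^ 2, -(3/4) * (y 0 * y 1),
    (3/4) * y 1 ^ 3 / (y 0 * Bx x) - (1/2) * (x 0 * y 2 ^ 2)]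

set_option maxHeartbeats 2000000 in
lemma keyAlg (x y : Fin 3 → ℝ) (hy0 : y 0 ≠ 0) (hA : 0 < Af x y) (k : Fin 3) :
    y 0 * MM x y 0 k + y 1 * MM x y 1 k + y 2 * MM x y 2 k - XX x y k
      = 4 * (1 / 2 * DD x y k 0 * GE x y 0 + 1 / 2 * DD x y k 1 * GE x y 1
          + 1 / 2 * DD x y k 2 * GE x y 2) := by
  have hB : Bx x ≠ 0 := (Real.exp_pos _).ne'
  have hAne : Af x y ≠ 0 := hA.ne'
  have h23 : Af x y ^ ((2:ℝ)/3) = Af x y * Pw x y := by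
    have h := (Real.rpow_add hA 1 ((2:ℝ)/3 - 1)).symm
    rw [Real.rpow_one, show (1:ℝ) + ((2:ℝ)/3 - 1) = (2:ℝ)/3 by norm_num] at h
    rw [Pw]; exact h.symm
  have hP2 : Pw2 x y = Pw x y / Af x y := by
    rw [Pw2, Pw, Real.rpow_sub hA, Real.rpow_one]
  have hAne' : y 1 ^ 3 + Bx x * y 2 * y 0 ^ 2 ≠ 0 := by
    simpa [Af] using hAne
  have hAne'' : y 1 ^ 3 + y 0 ^ 2 * Bx x * y 2 ≠ 0 := by
    rw [show y 1 ^ 3 + y 0 ^ 2 * Bx x * y 2 = y 1 ^ 3 + Bx x * y 2 * y 0 ^ 2 by ring]; exact hAne'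
  fin_cases k <;>
    (simp [MM, XX, DD, GE, Av, Hm, h23, hP2, Matrix.vecHead, Matrix.vecTail]
     simp only [Af]
     field_simp
     ring)

noncomputable def NM (x y : Fin 3 → ℝ) : Matrix (Fin 3) (Fin 3) ℝ :=
  !![-(1 / 2) * (3 + x 2) * y 0, 0, 0;
      -(3 / 4) * y 1, -(3 / 4) * y 0, 0;
      -(3 / 4) * (y 1) ^ 3 / ((y 0) ^ 2 * Real.exp (-(x 0) * (x 2))),
        (9 / 4) * (y 1) ^ 2 / ((y 0) * Real.exp (-(x 0) * (x 2))),
        -(y 2) * (x 0)]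

lemma pdGE (x y : Fin 3 → ℝ) (hy0 : y 0 ≠ 0) (i j : Fin 3) :
    pd (fun y' => GE x y' i) j y = NM x y i j := by
  have hB : Bx x ≠ 0 := (Real.exp_pos _).ne'
  have hBx : Real.exp (-(x 0) * (x 2)) ≠ 0 := (Real.exp_pos _).ne'
  fin_cases i <;> fin_cases j
  · -- (0,0)
    have hfun : (fun t => GE x (Function.update y 0 t) 0)
        = fun t => -(1/4) * (3 + x 2) * t ^ 2 := by
      funext t; simp [GE, Function.update_apply]
    have H : HasDerivAt (fun t : ℝ => -(1/4) * (3 + x 2) * t ^ 2)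
        (-(1/4) * (3 + x 2) * (2 * y 0)) (y 0) := by
      simpa [mul_assoc] using (hasDerivAt_pow 2 (y 0)).const_mul (-(1/4) * (3 + x 2))
    show deriv (fun t => GE x (Function.update y 0 t) 0) (y 0) = _
    rw [hfun, H.deriv]
    simp [NM, Matrix.vecHead, Matrix.vecTail]; try ring
  · -- (0,1)
    have hfun : (fun t => GE x (Function.update y 1 t) 0) = fun _ => GE x y 0 := by
      funext t; simp [GE, Function.update_apply]
    show deriv (fun t => GE x (Function.update y 1 t) 0) (y 1) = _
    rw [hfun, deriv_const]; simp [NM, Matrix.vecHead, Matrix.vecTail]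
  · -- (0,2)
    have hfun : (fun t => GE x (Function.update y 2 t) 0) = fun _ => GE x y 0 := by
      funext t; simp [GE, Function.update_apply]
    show deriv (fun t => GE x (Function.update y 2 t) 0) (y 2) = _
    rw [hfun, deriv_const]; simp [NM, Matrix.vecHead, Matrix.vecTail]
  · -- (1,0)
    have hfun : (fun t => GE x (Function.update y 0 t) 1)
        = fun t => -(3/4) * (t * y 1) := by
      funext t; simp [GE, Function.update_apply]
    have H : HasDerivAt (fun t : ℝ => -(3/4) * (t * y 1)) (-(3/4) * y 1) (y 0) := by
      simpa using ((hasDerivAt_id (y 0)).mul_const (y 1)).const_mul (-(3/4) : ℝ)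
    show deriv (fun t => GE x (Function.update y 0 t) 1) (y 0) = _
    rw [hfun, H.deriv]
    simp [NM, Matrix.vecHead, Matrix.vecTail]; try ring
  · -- (1,1)
    have hfun : (fun t => GE x (Function.update y 1 t) 1)
        = fun t => -(3/4) * (y 0 * t) := by
      funext t; simp [GE, Function.update_apply]
    have H : HasDerivAt (fun t : ℝ => -(3/4) * (y 0 * t)) (-(3/4) * y 0) (y 1) := by
      simpa using ((hasDerivAt_id (y 1)).const_mul (y 0)).const_mul (-(3/4) : ℝ)
    show deriv (fun t => GE x (Function.update y 1 t) 1) (y 1) = _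
    rw [hfun, H.deriv]
    simp [NM, Matrix.vecHead, Matrix.vecTail]; try ring
  · -- (1,2)
    have hfun : (fun t => GE x (Function.update y 2 t) 1) = fun _ => GE x y 1 := by
      funext t; simp [GE, Function.update_apply]
    show deriv (fun t => GE x (Function.update y 2 t) 1) (y 2) = _
    rw [hfun, deriv_const]; simp [NM, Matrix.vecHead, Matrix.vecTail]
  · -- (2,0)
    have hfun : (fun t => GE x (Function.update y 0 t) 2)
        = fun t => 3/4 * y 1 ^ 3 / (t * Bx x) - 1/2 * (x 0 * y 2 ^ 2) := by
      funext t; simp [GE, Function.update_apply]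
    have hd : HasDerivAt (fun t : ℝ => t * Bx x) (Bx x) (y 0) := by
      simpa using (hasDerivAt_id (y 0)).mul_const (Bx x)
    have hne : y 0 * Bx x ≠ 0 := mul_ne_zero hy0 hB
    have H : HasDerivAt (fun t => 3/4 * y 1 ^ 3 / (t * Bx x) - 1/2 * (x 0 * y 2 ^ 2)) _ (y 0) :=
      ((hasDerivAt_const (y 0) (3/4 * y 1 ^ 3)).div hd hne).sub_const
      (1/2 * (x 0 * y 2 ^ 2))
    show deriv (fun t => GE x (Function.update y 0 t) 2) (y 0) = _
    rw [hfun, H.deriv]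
    simp only [NM, Bx, Matrix.cons_val_zero, Matrix.cons_val_one, Matrix.head_cons,
      Matrix.cons_val_two, Matrix.tail_cons, Matrix.of_apply, Matrix.cons_val', Matrix.empty_val',
      Matrix.cons_val_fin_one, Matrix.head_fin_const]
    simp
    field_simp
  · -- (2,1)
    have hfun : (fun t => GE x (Function.update y 1 t) 2)
        = fun t => 3/4 * t ^ 3 / (y 0 * Bx x) - 1/2 * (x 0 * y 2 ^ 2) := by
      funext t; simp [GE, Function.update_apply]
    have hc : HasDerivAt (fun t : ℝ => 3/4 * t ^ 3) (3/4 * (3 * y 1 ^ 2)) (y 1) := by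
      simpa using (hasDerivAt_pow 3 (y 1)).const_mul ((3:ℝ)/4)
    have hne : y 0 * Bx x ≠ 0 := mul_ne_zero hy0 hB
    have H : HasDerivAt (fun t => 3/4 * t ^ 3 / (y 0 * Bx x) - 1/2 * (x 0 * y 2 ^ 2)) _ (y 1) :=
      (hc.div (hasDerivAt_const (y 1) (y 0 * Bx x)) hne).sub_const
      (1/2 * (x 0 * y 2 ^ 2))
    show deriv (fun t => GE x (Function.update y 1 t) 2) (y 1) = _
    rw [hfun, H.deriv]
    simp only [NM, Bx, Matrix.cons_val_zero, Matrix.cons_val_one, Matrix.head_cons,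
      Matrix.cons_val_two, Matrix.tail_cons, Matrix.of_apply, Matrix.cons_val', Matrix.empty_val',
      Matrix.cons_val_fin_one, Matrix.head_fin_const]
    simp
    field_simp
    ring
  · -- (2,2)
    have hfun : (fun t => GE x (Function.update y 2 t) 2)
        = fun t => 3/4 * y 1 ^ 3 / (y 0 * Bx x) - 1/2 * (x 0 * t ^ 2) := by
      funext t; simp [GE, Function.update_apply]
    have hf : HasDerivAt (fun t : ℝ => 1/2 * (x 0 * t ^ 2)) (1/2 * (x 0 * (2 * y 2))) (y 2) := by
      simpa [mul_assoc] using ((hasDerivAt_pow 2 (y 2)).const_mul (x 0)).const_mul ((1:ℝ)/2)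
    have H := hf.const_sub (3/4 * y 1 ^ 3 / (y 0 * Bx x))
    show deriv (fun t => GE x (Function.update y 2 t) 2) (y 2) = _
    rw [hfun, H.deriv]
    simp [NM, Matrix.vecHead, Matrix.vecTail]; try ring

/-- the Barthel connection coefficients of
`F = e^{−x1}(y2³ + e^{−x1x3} y3 y1²)^{1/3}` are
`N^1_1 = −½(3+x3)y1`, `N^2_1 = −(3/4)y2`, `N^2_2 = −(3/4)y1`,
`N^3_1 = −(3/4)y2³/(y1² e^{−x1x3})`, `N^3_2 = (9/4)y2²/(y1 e^{−x1x3})`, `N^3_3 = −y3 x1`,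
and all other coefficients vanish. -/
theorem statement4
    (g ginv : (Fin 3 → ℝ) → (Fin 3 → ℝ) → Fin 3 → Fin 3 → ℝ)
    (G : (Fin 3 → ℝ) → (Fin 3 → ℝ) → Fin 3 → ℝ)
    (N : (Fin 3 → ℝ) → (Fin 3 → ℝ) → Fin 3 → Fin 3 → ℝ)
    (hg : ∀ x y, U x y → ∀ i j,
      g x y i j = (1 / 2) * pd (fun y' => pd (fun y'' => F2 x y'') j y') i y)
    (hginv : ∀ x y, U x y → ∀ i k,
      (∑ j, ginv x y i j * g x y j k) = if i = k then (1 : ℝ) else 0)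
    (hG : ∀ x y, U x y → ∀ i,
      G x y i = (1 / 4) * ∑ k, ginv x y i k *
        ((∑ j, y j * pd (fun x' => pd (fun y' => F2 x' y') k y) j x)
          - pd (fun x' => F2 x' y) k x))
    (hN : ∀ x y, U x y → ∀ i j, N x y i j = pd (fun y' => G x y' i) j y) :
    ∀ x y, U x y → ∀ i j,
      N x y i j =
        (!![-(1 / 2) * (3 + x 2) * y 0, 0, 0;
            -(3 / 4) * y 1, -(3 / 4) * y 0, 0;
            -(3 / 4) * (y 1) ^ 3 / ((y 0) ^ 2 * Real.exp (-(x 0) * (x 2))),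
              (9 / 4) * (y 1) ^ 2 / ((y 0) * Real.exp (-(x 0) * (x 2))),
              -(y 2) * (x 0)] : Matrix (Fin 3) (Fin 3) ℝ) i j := by
  have hGeq : ∀ x' y', U x' y' → ∀ i', G x' y' i' = GE x' y' i' := by
    intro x' y' hU' i'
    obtain ⟨hy0', hApos'⟩ := hU'
    have hA' : 0 < Af x' y' := hApos'
    rw [hG x' y' ⟨hy0', hApos'⟩ i']
    have hbr : ∀ k : Fin 3,
        ((∑ j', y' j' * pd (fun x'' => pd (fun y'' => F2 x'' y'') k y') j' x')
          - pd (fun x'' => F2 x'' y') k x')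
        = 4 * ∑ m, g x' y' k m * GE x' y' m := by
      intro k
      simp only [Fin.sum_univ_three]
      rw [pd_pdx_F2 x' y' hA' 0 k, pd_pdx_F2 x' y' hA' 1 k, pd_pdx_F2 x' y' hA' 2 k,
        pdF2x x' y' hA' k, hg x' y' ⟨hy0', hApos'⟩ k 0, hg x' y' ⟨hy0', hApos'⟩ k 1,
        hg x' y' ⟨hy0', hApos'⟩ k 2, pd_pd_F2 x' y' hA' k 0, pd_pd_F2 x' y' hA' k 1,
        pd_pd_F2 x' y' hA' k 2]
      linear_combination keyAlg x' y' hy0' hA' k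
    simp only [hbr]
    have h0 := hginv x' y' ⟨hy0', hApos'⟩ i' 0
    have h1 := hginv x' y' ⟨hy0', hApos'⟩ i' 1
    have h2 := hginv x' y' ⟨hy0', hApos'⟩ i' 2
    simp only [Fin.sum_univ_three] at h0 h1 h2 ⊢
    have hdel : GE x' y' i' = GE x' y' 0 * (if i' = 0 then (1:ℝ) else 0)
        + GE x' y' 1 * (if i' = 1 then (1:ℝ) else 0)
        + GE x' y' 2 * (if i' = 2 then (1:ℝ) else 0) := by
      fin_cases i' <;> simp
    linear_combination GE x' y' 0 * h0 + GE x' y' 1 * h1 + GE x' y' 2 * h2 - hdel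
  intro x y hU i j
  obtain ⟨hy0, hApos⟩ := hU
  have hA : 0 < Af x y := hApos
  rw [hN x y ⟨hy0, hApos⟩ i j]
  have hc0 : Continuous fun t : ℝ => Function.update y j t 0 := cont_update y j 0
  have h1 : ∀ᶠ t in nhds (y j), Function.update y j t 0 ≠ 0 :=
    (hc0.continuousAt (x := y j)).eventually_ne
      (by simpa [Function.update_eq_self] using hy0)
  have hc : Continuous fun t : ℝ => Af x (Function.update y j t) := by
    have h : Continuous fun t : ℝ =>
        (Function.update y j t 1) ^ 3
          + Bx x * (Function.update y j t 2) * (Function.update y j t 0) ^ 2 :=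
      ((cont_update y j 1).pow 3).add
        ((continuous_const.mul (cont_update y j 2)).mul ((cont_update y j 0).pow 2))
    exact h
  have ht : Filter.Tendsto (fun t => Af x (Function.update y j t)) (nhds (y j))
      (nhds (Af x y)) := by
    simpa [ContinuousAt, Function.update_eq_self] using hc.continuousAt (x := y j)
  have h2 : ∀ᶠ t in nhds (y j), 0 < Af x (Function.update y j t) :=
    ht.eventually (eventually_gt_nhds hA)
  have hev : (fun t => G x (Function.update y j t) i)
      =ᶠ[nhds (y j)] fun t => GE x (Function.update y j t) i := by
    filter_upwards [h1, h2] with t ht1 ht2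
    exact hGeq x _ ⟨ht1, ht2⟩ i
  show deriv (fun t => G x (Function.update y j t) i) (y j) = _
  rw [hev.deriv_eq]
  have hfin := pdGE x y hy0 i j
  rw [show deriv (fun t => GE x (Function.update y j t) i) (y j) = NM x y i j from hfin]
  rfl
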